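/- Let Σ be a finite alphabet and let (A_i, B_i) ∈ ℝ^{n×n} × ℝ^{n×m} for i ∈ Σ. The discrete-time control switched system x(k+1) = A_{σ(k)} x(k) + B_{σ(k)} u(k) is mode-dependent feedback stabilizable (DFS) if and only if it is current-mode-dependent memory-feedback stabilizable (DFS_m). -/

import Mathlib

open Matrix Filter ENNReal

noncomputable section

/-- State history `[x(k), …, x(0)]` of the closed loop driven by the reversed
mode list `[i_{k-1}, …, i_0]`, under a current-mode-dependent memory controller `Ψd`
(which also sees the current mode). -/
def memHistD {n m : ℕ} {S : Type*} (A : S → Matrix (Fin n) (Fin n) ℝ)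
    (B : S → Matrix (Fin n) (Fin m) ℝ)
    (Ψd : List (EuclideanSpace ℝ (Fin n)) → List S → EuclideanSpace ℝ (Fin m))
    (x0 : EuclideanSpace ℝ (Fin n)) : List S → List (EuclideanSpace ℝ (Fin n))
  | [] => [x0]
  | i :: is =>
      WithLp.toLp 2 ((A i).mulVec ((memHistD A B Ψd x0 is).headD 0) +
        (B i).mulVec (Ψd (memHistD A B Ψd x0 is) (i :: is))) :: memHistD A B Ψd x0 is

/-- Closed-loop solution `φ(k, σ, x₀, Ψd)` under the switching signal `σ`:
at each step, `Ψd` receives the current and past states `(x(k), …, x(0))`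
and the current and past modes `(σ(k), …, σ(0))`. -/
def memTrajD {n m : ℕ} {S : Type*} (A : S → Matrix (Fin n) (Fin n) ℝ)
    (B : S → Matrix (Fin n) (Fin m) ℝ)
    (Ψd : List (EuclideanSpace ℝ (Fin n)) → List S → EuclideanSpace ℝ (Fin m))
    (x0 : EuclideanSpace ℝ (Fin n)) (σ : ℕ → S) (k : ℕ) : EuclideanSpace ℝ (Fin n) :=
  (memHistD A B Ψd x0 (((List.range k).reverse).map σ)).headD 0

namespace DFSAux

variable {n m : ℕ} {S : Type*}
  (A : S → Matrix (Fin n) (Fin n) ℝ) (B : S → Matrix (Fin n) (Fin m) ℝ)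

abbrev Ctrl (n m : ℕ) (S : Type*) :=
  List (EuclideanSpace ℝ (Fin n)) → List S → EuclideanSpace ℝ (Fin m)

def shift (Ψ : Ctrl n m S) (p : List (EuclideanSpace ℝ (Fin n))) (q : List S) : Ctrl n m S :=
  fun xs is => Ψ (xs ++ p) (is ++ q)

lemma shift_nil (Ψ : Ctrl n m S) : shift Ψ [] [] = Ψ := by
  funext xs is; simp [shift]

lemma memHistD_ne_nil (Ψ : Ctrl n m S) (x0 : EuclideanSpace ℝ (Fin n)) (l : List S) :
    memHistD A B Ψ x0 l ≠ [] := by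
  cases l <;> simp [memHistD]

/-- one step from `x0` with mode `i` under the `(p,q)`-shifted controller -/
def step1 (Ψ : Ctrl n m S) (p : List (EuclideanSpace ℝ (Fin n))) (q : List S)
    (x0 : EuclideanSpace ℝ (Fin n)) (i : S) : EuclideanSpace ℝ (Fin n) :=
  WithLp.toLp 2 ((A i).mulVec x0 + (B i).mulVec (Ψ (x0 :: p) (i :: q)))

lemma shift_hist (Ψ : Ctrl n m S) (p : List (EuclideanSpace ℝ (Fin n))) (q : List S)
    (x0 : EuclideanSpace ℝ (Fin n)) (i : S) (l : List S) :
    memHistD A B (shift Ψ p q) x0 (l ++ [i]) =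
      memHistD A B (shift Ψ (x0 :: p) (i :: q)) (step1 A B Ψ p q x0 i) l ++ [x0] := by
  induction l with
  | nil => simp [memHistD, shift, step1]
  | cons j l' ih =>
      obtain ⟨h, t, ht⟩ := List.exists_cons_of_ne_nil
        (memHistD_ne_nil A B (shift Ψ (x0 :: p) (i :: q)) (step1 A B Ψ p q x0 i) l')
      rw [List.cons_append, memHistD, ih, ht, memHistD, ht]
      simp [shift, List.append_assoc]

lemma shift_traj (Ψ : Ctrl n m S) (p : List (EuclideanSpace ℝ (Fin n))) (q : List S)
    (x0 : EuclideanSpace ℝ (Fin n)) (i : S) (σ : ℕ → S) (k : ℕ) :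
    memTrajD A B (shift Ψ p q) x0 (fun t => Nat.casesOn t i σ) (k + 1) =
      memTrajD A B (shift Ψ (x0 :: p) (i :: q)) (step1 A B Ψ p q x0 i) σ k := by
  have hl : ((List.range (k+1)).reverse).map (fun t => Nat.casesOn t i σ)
      = (((List.range k).reverse).map σ) ++ [i] := by
    rw [List.range_succ_eq_map]
    simp [List.map_reverse, List.map_map, Function.comp]
  rw [memTrajD, hl, shift_hist, memTrajD]
  obtain ⟨h, t, ht⟩ := List.exists_cons_of_ne_nil
    (memHistD_ne_nil A B (shift Ψ (x0 :: p) (i :: q)) (step1 A B Ψ p q x0 i)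
      (((List.range k).reverse).map σ))
  rw [ht]; simp

lemma traj_zero (Ψ : Ctrl n m S) (x0 : EuclideanSpace ℝ (Fin n)) (σ : ℕ → S) :
    memTrajD A B Ψ x0 σ 0 = x0 := by
  simp [memTrajD, memHistD]

end DFSAux

namespace DFSAux

variable {n m : ℕ} {S : Type*} [Nonempty S]
  (A : S → Matrix (Fin n) (Fin n) ℝ) (B : S → Matrix (Fin n) (Fin m) ℝ)

lemma ENN_div_pow_succ (a g : ℝ≥0∞) (hg0 : g ≠ 0) (hgt : g ≠ ∞) (k : ℕ) :
    a / g ^ k = g * (a / g ^ (k + 1)) := by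
  rw [← mul_div_assoc, pow_succ', ENNReal.mul_div_mul_left a (g ^ k) hg0 hgt]

/-- worst-case discounted value of the `(p,q)`-shifted controller from `x` -/
def val (Ψ : Ctrl n m S) (g : ℝ≥0∞) (p : List (EuclideanSpace ℝ (Fin n))) (q : List S)
    (x : EuclideanSpace ℝ (Fin n)) : ℝ≥0∞ :=
  ⨆ σ : ℕ → S, ⨆ k : ℕ, (‖memTrajD A B (shift Ψ p q) x σ k‖₊ : ℝ≥0∞) / g ^ k

/-- value function: infimum over all history shifts -/
def Vf (Ψ : Ctrl n m S) (g : ℝ≥0∞) (x : EuclideanSpace ℝ (Fin n)) : ℝ≥0∞ :=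
  ⨅ p : List (EuclideanSpace ℝ (Fin n)), ⨅ q : List S, val A B Ψ g p q x

lemma norm_le_val (Ψ : Ctrl n m S) (g : ℝ≥0∞) (p : List (EuclideanSpace ℝ (Fin n)))
    (q : List S) (x : EuclideanSpace ℝ (Fin n)) :
    (‖x‖₊ : ℝ≥0∞) ≤ val A B Ψ g p q x := by
  obtain ⟨i⟩ := ‹Nonempty S›
  rw [val]
  calc (‖x‖₊ : ℝ≥0∞) = (‖memTrajD A B (shift Ψ p q) x (fun _ => i) 0‖₊ : ℝ≥0∞) / g ^ 0 := by
        rw [traj_zero]; simp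
    _ ≤ _ := le_iSup₂_of_le (fun _ => i) 0 le_rfl

lemma norm_le_Vf (Ψ : Ctrl n m S) (g : ℝ≥0∞) (x : EuclideanSpace ℝ (Fin n)) :
    (‖x‖₊ : ℝ≥0∞) ≤ Vf A B Ψ g x := by
  rw [Vf]; exact le_iInf₂ fun p q => norm_le_val A B Ψ g p q x

lemma val_step (Ψ : Ctrl n m S) (g : ℝ≥0∞) (hg0 : g ≠ 0) (hgt : g ≠ ∞)
    (p : List (EuclideanSpace ℝ (Fin n))) (q : List S)
    (x : EuclideanSpace ℝ (Fin n)) (i : S) :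
    val A B Ψ g (x :: p) (i :: q) (step1 A B Ψ p q x i) ≤ g * val A B Ψ g p q x := by
  rw [val]
  refine iSup₂_le fun σ k => ?_
  rw [← shift_traj]
  rw [ENN_div_pow_succ _ g hg0 hgt k]
  refine mul_le_mul_right ?_ g
  exact le_iSup₂_of_le ((fun t => Nat.casesOn t i σ : ℕ → S)) (k + 1) le_rfl

lemma Vf_le_val (Ψ : Ctrl n m S) (g : ℝ≥0∞) (p : List (EuclideanSpace ℝ (Fin n)))
    (q : List S) (x : EuclideanSpace ℝ (Fin n)) :
    Vf A B Ψ g x ≤ val A B Ψ g p q x := by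
  rw [Vf]
  refine le_trans (iInf_le _ p) ?_
  exact iInf_le _ q

lemma Vf_step (Ψ : Ctrl n m S) (g : ℝ≥0∞) (hg0 : g ≠ 0) (hgt : g ≠ ∞)
    (p : List (EuclideanSpace ℝ (Fin n))) (q : List S)
    (x : EuclideanSpace ℝ (Fin n)) (i : S) :
    Vf A B Ψ g (step1 A B Ψ p q x i) ≤ g * val A B Ψ g p q x := by
  have h1 : Vf A B Ψ g (step1 A B Ψ p q x i)
      ≤ val A B Ψ g (x :: p) (i :: q) (step1 A B Ψ p q x i) :=
    Vf_le_val A B Ψ g (x :: p) (i :: q) (step1 A B Ψ p q x i)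
  exact h1.trans (val_step A B Ψ g hg0 hgt p q x i)

lemma step1_def (Ψ : Ctrl n m S) (p : List (EuclideanSpace ℝ (Fin n))) (q : List S)
    (x : EuclideanSpace ℝ (Fin n)) (i : S) :
    step1 A B Ψ p q x i = WithLp.toLp 2 ((A i).mulVec x + (B i).mulVec (Ψ (x :: p) (i :: q))) := rfl

end DFSAux

namespace DFSAux

variable {n m : ℕ} {S : Type*} [Nonempty S]
  (A : S → Matrix (Fin n) (Fin n) ℝ) (B : S → Matrix (Fin n) (Fin m) ℝ)

lemma val_nil_le (Ψ : Ctrl n m S) (M γ γ₀ : ℝ) (hγ : 0 ≤ γ) (hγγ₀ : γ ≤ γ₀) (hM : 0 ≤ M)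
    (hγ₀ : 0 < γ₀)
    (hb : ∀ x0 σ k, ‖memTrajD A B Ψ x0 σ k‖ ≤ M * γ ^ k * ‖x0‖)
    (x : EuclideanSpace ℝ (Fin n)) :
    val A B Ψ (ENNReal.ofReal γ₀) [] [] x ≤ ENNReal.ofReal M * (‖x‖₊ : ℝ≥0∞) := by
  rw [val, shift_nil]
  refine iSup₂_le fun σ k => ?_
  rw [ENNReal.div_le_iff (by positivity) (by simp [ENNReal.pow_ne_top])]
  have h1 : (‖memTrajD A B Ψ x σ k‖₊ : ℝ≥0∞) = ENNReal.ofReal ‖memTrajD A B Ψ x σ k‖ :=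
    ((ofReal_norm _).trans (enorm_eq_nnnorm _)).symm
  have h2 : ENNReal.ofReal M * (‖x‖₊ : ℝ≥0∞) * ENNReal.ofReal γ₀ ^ k
      = ENNReal.ofReal (M * ‖x‖ * γ₀ ^ k) := by
    rw [← enorm_eq_nnnorm, ← ofReal_norm, ← ENNReal.ofReal_pow hγ₀.le,
      ← ENNReal.ofReal_mul hM, ← ENNReal.ofReal_mul (by positivity)]
  rw [h1, h2]
  refine ENNReal.ofReal_le_ofReal ?_
  calc ‖memTrajD A B Ψ x σ k‖ ≤ M * γ ^ k * ‖x‖ := hb x σ k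
    _ ≤ M * γ₀ ^ k * ‖x‖ := by
        have h := pow_le_pow_left₀ hγ hγγ₀ k
        exact mul_le_mul_of_nonneg_right (mul_le_mul_of_nonneg_left h hM) (norm_nonneg _)
    _ = M * ‖x‖ * γ₀ ^ k := by ring

lemma Vf_le (Ψ : Ctrl n m S) (M γ γ₀ : ℝ) (hγ : 0 ≤ γ) (hγγ₀ : γ ≤ γ₀) (hM : 0 ≤ M)
    (hγ₀ : 0 < γ₀)
    (hb : ∀ x0 σ k, ‖memTrajD A B Ψ x0 σ k‖ ≤ M * γ ^ k * ‖x0‖)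
    (x : EuclideanSpace ℝ (Fin n)) :
    Vf A B Ψ (ENNReal.ofReal γ₀) x ≤ ENNReal.ofReal M * (‖x‖₊ : ℝ≥0∞) :=
  (Vf_le_val A B Ψ _ [] [] x).trans (val_nil_le A B Ψ M γ γ₀ hγ hγγ₀ hM hγ₀ hb x)

lemma exists_good_u (Ψ : Ctrl n m S) (g g₁ : ℝ≥0∞) (hg0 : g ≠ 0) (hgt : g ≠ ∞)
    (hgg₁ : g < g₁)
    (hub : ∀ x, val A B Ψ g [] [] x ≤ ENNReal.ofReal M * (‖x‖₊ : ℝ≥0∞))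
    (hM : M ≠ 0 → True) -- dummy
    (i : S) (x : EuclideanSpace ℝ (Fin n)) :
    ∃ u : EuclideanSpace ℝ (Fin m), Vf A B Ψ g (WithLp.toLp 2 ((A i).mulVec x + (B i).mulVec u)) ≤ g₁ * Vf A B Ψ g x := by
  by_cases hx : Vf A B Ψ g x = 0
  · refine ⟨Ψ (x :: []) (i :: []), ?_⟩
    have hx0 : (‖x‖₊ : ℝ≥0∞) = 0 :=
      le_antisymm (hx ▸ norm_le_Vf A B Ψ g x) zero_le
    have h0 : val A B Ψ g [] [] x = 0 :=
      le_antisymm (by simpa [hx0] using hub x) zero_le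
    have h := Vf_step A B Ψ g hg0 hgt [] [] x i
    rw [step1_def, h0, mul_zero] at h
    exact h.trans zero_le
  · have hfin : Vf A B Ψ g x ≠ ∞ := by
      refine ne_top_of_le_ne_top ?_ ((Vf_le_val A B Ψ g [] [] x).trans (hub x))
      exact ENNReal.mul_ne_top ENNReal.ofReal_ne_top ENNReal.coe_ne_top
    have hone : (1 : ℝ≥0∞) < g₁ / g := by
      rw [ENNReal.lt_div_iff_mul_lt (Or.inl hg0) (Or.inl hgt)]
      simpa using hgg₁
    have hlt : Vf A B Ψ g x < (g₁ / g) * Vf A B Ψ g x := by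
      nth_rewrite 1 [← one_mul (Vf A B Ψ g x)]
      exact ENNReal.mul_lt_mul_left hx hfin hone
    rw [Vf] at hlt
    obtain ⟨p, hp⟩ := iInf_lt_iff.mp hlt
    obtain ⟨q, hq⟩ := iInf_lt_iff.mp hp
    refine ⟨Ψ (x :: p) (i :: q), ?_⟩
    have h2 := Vf_step A B Ψ g hg0 hgt p q x i
    rw [step1_def] at h2
    refine h2.trans ?_
    calc g * val A B Ψ g p q x ≤ g * ((g₁ / g) * Vf A B Ψ g x) := mul_le_mul_right hq.le _
      _ = (g * (g₁ / g)) * Vf A B Ψ g x := by rw [mul_assoc]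
      _ = g₁ * Vf A B Ψ g x := by rw [ENNReal.mul_div_cancel hg0 hgt]

end DFSAux

namespace DFSAux

variable {n m : ℕ} {S : Type*} [Nonempty S]
  (A : S → Matrix (Fin n) (Fin n) ℝ) (B : S → Matrix (Fin n) (Fin m) ℝ)

lemma traj_succ (Ψ : Ctrl n m S) (x0 : EuclideanSpace ℝ (Fin n)) (σ : ℕ → S) (k : ℕ) :
    memTrajD A B Ψ x0 σ (k + 1) =
      WithLp.toLp 2 ((A (σ k)).mulVec (memTrajD A B Ψ x0 σ k) +
        (B (σ k)).mulVec (Ψ (memHistD A B Ψ x0 (((List.range k).reverse).map σ))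
          (σ k :: ((List.range k).reverse).map σ))) := by
  have hl : ((List.range (k + 1)).reverse).map σ = σ k :: ((List.range k).reverse).map σ := by
    rw [List.range_succ]; simp
  rw [memTrajD, hl, memHistD, memTrajD]
  simp

end DFSAux


open DFSAux

/-- A switched linear system is mode-dependent feedback
stabilizable (DFS) iff it is current-mode-dependent memory-feedback stabilizable (DFS_m). -/
theorem dfs_iff_dfs_mem {n m : ℕ} (hn : 0 < n) (hm : 0 < m) {S : Type*} [Fintype S] [Nonempty S]
    (A : S → Matrix (Fin n) (Fin n) ℝ) (B : S → Matrix (Fin n) (Fin m) ℝ) :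
    (∃ M > (0 : ℝ), ∃ γ ∈ Set.Ico (0 : ℝ) 1,
      ∃ Φd : S → EuclideanSpace ℝ (Fin n) → EuclideanSpace ℝ (Fin m),
        ∀ (x : ℕ → EuclideanSpace ℝ (Fin n)) (σ : ℕ → S),
          (∀ k, x (k + 1) = (A (σ k)).mulVec (x k) + (B (σ k)).mulVec (Φd (σ k) (x k))) →
          ∀ k, ‖x k‖ ≤ M * γ ^ k * ‖x 0‖) ↔
    (∃ M > (0 : ℝ), ∃ γ ∈ Set.Ico (0 : ℝ) 1,
      ∃ Ψd : List (EuclideanSpace ℝ (Fin n)) → List S → EuclideanSpace ℝ (Fin m),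
        ∀ (x0 : EuclideanSpace ℝ (Fin n)) (σ : ℕ → S) (k : ℕ),
          ‖memTrajD A B Ψd x0 σ k‖ ≤ M * γ ^ k * ‖x0‖) := by
  constructor
  · -- DFS → DFS_m : a memoryless controller is a special memory controller
    rintro ⟨M, hM, γ, hγ, Φd, hΦ⟩
    refine ⟨M, hM, γ, hγ, ?_⟩
    refine ⟨fun xs is => match xs, is with
      | xh :: _, ih :: _ => Φd ih xh
      | _, _ => 0, fun x0 σ k => ?_⟩
    set Ψd : Ctrl n m S := fun xs is => match xs, is with
      | xh :: _, ih :: _ => Φd ih xh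
      | _, _ => 0 with hΨd
    show ‖memTrajD A B Ψd x0 σ k‖ ≤ M * γ ^ k * ‖x0‖
    have hrec : ∀ j, memTrajD A B Ψd x0 σ (j + 1) =
        WithLp.toLp 2 ((A (σ j)).mulVec (memTrajD A B Ψd x0 σ j) +
          (B (σ j)).mulVec (Φd (σ j) (memTrajD A B Ψd x0 σ j))) := by
      intro j
      rw [traj_succ]
      obtain ⟨h, t, ht⟩ := List.exists_cons_of_ne_nil
        (memHistD_ne_nil A B Ψd x0 (((List.range j).reverse).map σ))
      rw [memTrajD, ht]
      rfl
    have := hΦ (fun j => memTrajD A B Ψd x0 σ j) σ (fun j => congrArg WithLp.ofLp (hrec j)) k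
    rwa [traj_zero] at this
  · -- DFS_m → DFS : value-function construction
    rintro ⟨M, hM, γ, ⟨hγ0, hγ1⟩, Ψ, hb⟩
    set γ₀ : ℝ := max γ (1/2) with hγ₀def
    have hγ₀pos : (0:ℝ) < γ₀ := lt_max_of_lt_right (by norm_num)
    have hγ₀lt1 : γ₀ < 1 := max_lt hγ1 (by norm_num)
    set γ₁ : ℝ := (1 + γ₀) / 2 with hγ₁def
    have hγ₀γ₁ : γ₀ < γ₁ := by rw [hγ₁def]; linarith
    have hγ₁lt1 : γ₁ < 1 := by rw [hγ₁def]; linarith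
    have hγ₁pos : (0:ℝ) < γ₁ := by positivity
    set g : ℝ≥0∞ := ENNReal.ofReal γ₀ with hgdef
    set g₁ : ℝ≥0∞ := ENNReal.ofReal γ₁ with hg₁def
    have hg0 : g ≠ 0 := by
      rw [hgdef]; simp [ENNReal.ofReal_eq_zero, not_le, hγ₀pos]
    have hgt : g ≠ ∞ := ENNReal.ofReal_ne_top
    have hg₁t : g₁ ≠ ∞ := ENNReal.ofReal_ne_top
    have hgg₁ : g < g₁ := by
      rw [hgdef, hg₁def]
      exact (ENNReal.ofReal_lt_ofReal_iff hγ₁pos).mpr hγ₀γ₁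
    have hub : ∀ x, val A B Ψ g [] [] x ≤ ENNReal.ofReal M * (‖x‖₊ : ℝ≥0∞) :=
      val_nil_le A B Ψ M γ γ₀ hγ0 (le_max_left _ _) hM.le hγ₀pos hb
    have key : ∀ (i : S) (x : EuclideanSpace ℝ (Fin n)),
        ∃ u : EuclideanSpace ℝ (Fin m), Vf A B Ψ g (WithLp.toLp 2 ((A i).mulVec x + (B i).mulVec u)) ≤ g₁ * Vf A B Ψ g x :=
      fun i x => exists_good_u A B Ψ g g₁ hg0 hgt hgg₁ hub (fun _ => trivial) i x
    refine ⟨M, hM, γ₁, ⟨hγ₁pos.le, hγ₁lt1⟩,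
      fun i x => Classical.choose (key i x), ?_⟩
    intro x σ hrec k
    have hdec : ∀ j, Vf A B Ψ g (x j) ≤ g₁ ^ j * Vf A B Ψ g (x 0) := by
      intro j
      induction j with
      | zero => simp
      | succ j ih =>
          rw [show x (j + 1) = _ from congrArg (WithLp.toLp 2) (hrec j)]
          calc Vf A B Ψ g (WithLp.toLp 2 ((A (σ j)).mulVec (x j) +
                (B (σ j)).mulVec (WithLp.ofLp (Classical.choose (key (σ j) (x j))))))
              ≤ g₁ * Vf A B Ψ g (x j) := Classical.choose_spec (key (σ j) (x j))
            _ ≤ g₁ * (g₁ ^ j * Vf A B Ψ g (x 0)) := mul_le_mul_right ih g₁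
            _ = g₁ ^ (j + 1) * Vf A B Ψ g (x 0) := by rw [pow_succ', mul_assoc]
    have h1 : (‖x k‖₊ : ℝ≥0∞) ≤ ENNReal.ofReal (M * γ₁ ^ k * ‖x 0‖) := by
      calc (‖x k‖₊ : ℝ≥0∞) ≤ Vf A B Ψ g (x k) := norm_le_Vf A B Ψ g (x k)
        _ ≤ g₁ ^ k * Vf A B Ψ g (x 0) := hdec k
        _ ≤ g₁ ^ k * (ENNReal.ofReal M * (‖x 0‖₊ : ℝ≥0∞)) :=
            mul_le_mul_right (Vf_le A B Ψ M γ γ₀ hγ0 (le_max_left _ _) hM.le hγ₀pos hb (x 0)) _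
        _ = ENNReal.ofReal (M * γ₁ ^ k * ‖x 0‖) := by
            rw [hg₁def, ← enorm_eq_nnnorm, ← ofReal_norm, ← ENNReal.ofReal_pow hγ₁pos.le,
              ← ENNReal.ofReal_mul (by positivity), ← ENNReal.ofReal_mul (by positivity)]
            ring_nf
    rw [← enorm_eq_nnnorm (x k), ← ofReal_norm (x k)] at h1
    exact (ENNReal.ofReal_le_ofReal_iff (by positivity)).mp h1
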